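/- arXiv:2210.15729 — 3 statements merged into one kernel-verified Lean document; each statement's English description precedes it below -/
import Mathlib

section
/- Let k ∈ ℕ with k ≥ 2, and let ū : (0,∞) → ℝ be smooth, belonging to H^k((0,∞)) with ∂_r^i ū(0) = 0 for all i < k − 1 and ∫₀^∞ (|∂_r^k ū|² + r^(−2)|∂_r^(k−1) ū|²) r dr < ∞. Then ∫₀^∞ r^(−2k) |ū(r)|² r dr ≤ c ∫₀^∞ r^(−2)|∂_r^(k−1) ū(r)|² r dr for a constant c depending only on k, and consequently Σ_{i=0}^k ∫₀^∞ |∂_r^i ū|² r^(2(i−k)) r dr ≤ c' ∫₀^∞ (|∂_r^k ū|² + r^(−2) |∂_r^(k−1) ū|²) r dr. -/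
open MeasureTheory Set

open MeasureTheory Set
open scoped ENNReal

lemma meas_rpow (e : ℝ) : Measurable fun t : ℝ => t ^ e := by measurability

lemma meas_main {f : ℝ → ℝ} (hf : Continuous f) (e : ℝ) :
    Measurable fun t : ℝ => ENNReal.ofReal (f t ^ 2 * t ^ e) :=
  ((hf.measurable.pow_const 2).mul (meas_rpow e)).ennreal_ofReal

lemma hardy_ineq {f : ℝ → ℝ} (hf : Continuous f) {a : ℝ} (ha : 1 < a) :
    ∫⁻ x in Ioi (0:ℝ), ENNReal.ofReal ((∫ t in (0:ℝ)..x, f t)^2 * x ^ (-a)) ≤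
      ENNReal.ofReal (4/(a-1)^2) *
        ∫⁻ x in Ioi (0:ℝ), ENNReal.ofReal ((f x)^2 * x ^ (2-a)) := by
  set p : ℝ := (3-a)/2 with hp
  have h1p : 1 - p = (a-1)/2 := by rw [hp]; ring
  have h1p' : (0:ℝ) < 1 - p := by rw [h1p]; linarith
  have hc : 1 - p - a < -1 := by rw [hp]; linarith
  have hc1 : (1 - p - a) + 1 = -((a-1)/2) := by rw [hp]; ring
  set g : ℝ → ℝ≥0∞ := fun t => ENNReal.ofReal (f t ^ 2 * t ^ p) with hgdef
  set w : ℝ → ℝ≥0∞ := fun x => ENNReal.ofReal (x ^ (1 - p - a) / (1 - p)) with hwdef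
  have hg : Measurable g := meas_main hf p
  have hw : Measurable w := ((meas_rpow (1-p-a)).div_const _).ennreal_ofReal
  -- pointwise bound
  have key : ∀ x : ℝ, 0 < x →
      ENNReal.ofReal ((∫ t in (0:ℝ)..x, f t)^2 * x ^ (-a)) ≤
        (∫⁻ t in Ioc (0:ℝ) x, g t) * w x := by
    intro x hx
    have habs : |∫ t in (0:ℝ)..x, f t| ≤ ∫ t in (0:ℝ)..x, |f t| :=
      intervalIntegral.abs_integral_le_integral_abs hx.le
    have hsq : (∫ t in (0:ℝ)..x, f t)^2 ≤ (∫ t in (0:ℝ)..x, |f t|)^2 := by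
      rw [← sq_abs]
      exact pow_le_pow_left₀ (abs_nonneg _) habs 2
    have habsint : IntegrableOn (fun t => |f t|) (Ioc 0 x) := (hf.abs).integrableOn_Ioc
    have e1 : ENNReal.ofReal (∫ t in (0:ℝ)..x, |f t|)
        = ∫⁻ t in Ioc (0:ℝ) x, ENNReal.ofReal |f t| := by
      rw [intervalIntegral.integral_of_le hx.le]
      exact ofReal_integral_eq_lintegral_ofReal habsint
        (Filter.Eventually.of_forall fun t => abs_nonneg _)
    -- Cauchy–Schwarz
    set F : ℝ → ℝ≥0∞ := fun t => ENNReal.ofReal (|f t| * t ^ (p/2)) with hFdef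
    set G : ℝ → ℝ≥0∞ := fun t => ENNReal.ofReal (t ^ (-(p/2))) with hGdef
    have hFm : Measurable F := (hf.abs.measurable.mul (meas_rpow (p/2))).ennreal_ofReal
    have hGm : Measurable G := (meas_rpow (-(p/2))).ennreal_ofReal
    have h22 : Real.HolderConjugate 2 2 := Real.HolderConjugate.two_two
    have hCS0 := ENNReal.lintegral_mul_le_Lp_mul_Lq (volume.restrict (Ioc (0:ℝ) x)) h22
      hFm.aemeasurable hGm.aemeasurable
    have hA : (∫⁻ t in Ioc (0:ℝ) x, F t ^ (2:ℝ)) = ∫⁻ t in Ioc (0:ℝ) x, g t := by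
      refine setLIntegral_congr_fun measurableSet_Ioc
        (fun t ht => ?_)
      rw [hFdef, ENNReal.ofReal_rpow_of_nonneg
        (mul_nonneg (abs_nonneg _) (Real.rpow_nonneg ht.1.le _)) (by norm_num : (0:ℝ) ≤ 2)]
      rw [Real.rpow_two, mul_pow, sq_abs, hgdef]
      congr 2
      rw [← Real.rpow_natCast (t ^ (p/2)) 2, ← Real.rpow_mul ht.1.le]
      norm_num
    have hB : (∫⁻ t in Ioc (0:ℝ) x, G t ^ (2:ℝ))
        = ∫⁻ t in Ioc (0:ℝ) x, ENNReal.ofReal (t ^ (-p)) := by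
      refine setLIntegral_congr_fun measurableSet_Ioc
        (fun t ht => ?_)
      rw [hGdef, ENNReal.ofReal_rpow_of_nonneg (Real.rpow_nonneg ht.1.le _)
        (by norm_num : (0:ℝ) ≤ 2), Real.rpow_two,
        ← Real.rpow_natCast (t ^ (-(p/2))) 2, ← Real.rpow_mul ht.1.le]
      norm_num
    rw [hA, hB] at hCS0
    have hCS : (∫⁻ t in Ioc (0:ℝ) x, ENNReal.ofReal |f t|) ^ 2 ≤
        (∫⁻ t in Ioc (0:ℝ) x, g t) * (∫⁻ t in Ioc (0:ℝ) x, ENNReal.ofReal (t ^ (-p))) := by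
      have hsplit : (∫⁻ t in Ioc (0:ℝ) x, ENNReal.ofReal |f t|)
          = ∫⁻ t in Ioc (0:ℝ) x, (F * G) t := by
        refine setLIntegral_congr_fun measurableSet_Ioc
          (fun t ht => ?_)
        simp only [Pi.mul_apply, hFdef, hGdef]
        rw [← ENNReal.ofReal_mul (mul_nonneg (abs_nonneg _) (Real.rpow_nonneg ht.1.le _)),
          mul_assoc, ← Real.rpow_add ht.1]
        norm_num
      rw [hsplit]
      refine le_trans (pow_le_pow_left₀ (by positivity) hCS0 2) (le_of_eq ?_)
      rw [mul_pow, ← ENNReal.rpow_two, ← ENNReal.rpow_two, ← ENNReal.rpow_mul,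
        ← ENNReal.rpow_mul]
      norm_num
    -- compute ∫⁻ t in Ioc 0 x, t^(-p)
    have hBval : (∫⁻ t in Ioc (0:ℝ) x, ENNReal.ofReal (t ^ (-p))) =
        ENNReal.ofReal (x ^ (1-p) / (1-p)) := by
      have hint : IntegrableOn (fun t : ℝ => t ^ (-p)) (Ioc 0 x) := by
        have := intervalIntegral.intervalIntegrable_rpow' (a := 0) (b := x) (r := -p)
          (by linarith)
        rwa [intervalIntegrable_iff_integrableOn_Ioc_of_le hx.le] at this
      rw [← ofReal_integral_eq_lintegral_ofReal hint ?_]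
      · congr 1
        rw [← intervalIntegral.integral_of_le hx.le,
          integral_rpow (Or.inl (by linarith : (-1:ℝ) < -p)),
          Real.zero_rpow (by linarith : -p + 1 ≠ 0)]
        rw [show -p + 1 = 1 - p by ring]
        ring
      · filter_upwards [ae_restrict_mem measurableSet_Ioc] with t ht
        exact Real.rpow_nonneg ht.1.le _
    -- put things together
    rw [ENNReal.ofReal_mul (sq_nonneg _)]
    have h2 : ENNReal.ofReal ((∫ t in (0:ℝ)..x, f t)^2) ≤
        (∫⁻ t in Ioc (0:ℝ) x, ENNReal.ofReal |f t|) ^ 2 := by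
      rw [← e1, ← ENNReal.ofReal_pow (intervalIntegral.integral_nonneg hx.le
        (fun t _ => abs_nonneg _))]
      exact ENNReal.ofReal_le_ofReal hsq
    refine le_trans (mul_le_mul' (h2.trans hCS) le_rfl) ?_
    rw [hBval, mul_assoc, ← ENNReal.ofReal_mul (by positivity)]
    refine mul_le_mul' le_rfl (le_of_eq ?_)
    rw [hwdef]
    congr 1
    rw [div_mul_eq_mul_div, ← Real.rpow_add hx]
    ring_nf
  -- integrate the pointwise bound
  have step1 : ∫⁻ x in Ioi (0:ℝ), ENNReal.ofReal ((∫ t in (0:ℝ)..x, f t)^2 * x ^ (-a)) ≤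
      ∫⁻ x in Ioi (0:ℝ), (∫⁻ t in Ioc (0:ℝ) x, g t) * w x := by
    refine lintegral_mono_ae ?_
    filter_upwards [ae_restrict_mem measurableSet_Ioi] with x hx
    exact key x hx
  refine step1.trans ?_
  -- double integral, swap
  set H : ℝ → ℝ → ℝ≥0∞ := fun x t => if t ≤ x then g t * w x else 0 with hHdef
  have hHmeas : Measurable (Function.uncurry H) := by
    apply Measurable.ite
    · exact measurableSet_le measurable_snd measurable_fst
    · exact (hg.comp measurable_snd).mul (hw.comp measurable_fst)
    · exact measurable_const
  have e2 : ∀ x : ℝ, (∫⁻ t in Ioc (0:ℝ) x, g t) * w x = ∫⁻ t in Ioi (0:ℝ), H x t := by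
    intro x
    rw [← lintegral_mul_const _ hg]
    have hind : ∀ t, H x t = (Iic x).indicator (fun t => g t * w x) t := by
      intro t; simp [hHdef, Set.indicator_apply]
    simp_rw [hind]
    rw [lintegral_indicator measurableSet_Iic, Measure.restrict_restrict measurableSet_Iic,
      Set.inter_comm, Set.Ioi_inter_Iic]
  simp_rw [e2]
  rw [lintegral_lintegral_swap (hHmeas.aemeasurable)]
  -- inner integral in x
  have e3 : ∀ t : ℝ, 0 < t → (∫⁻ x in Ioi (0:ℝ), H x t) =
      ENNReal.ofReal (4/(a-1)^2) * ENNReal.ofReal (f t ^ 2 * t ^ (2-a)) := by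
    intro t ht
    have hind : ∀ x, H x t = (Ici t).indicator (fun x => g t * w x) x := by
      intro x; simp [hHdef, Set.indicator_apply]
    simp_rw [hind]
    have hIci : Ici t ∩ Ioi (0:ℝ) = Ici t :=
      Set.inter_eq_left.mpr (fun x hx => lt_of_lt_of_le ht hx)
    rw [lintegral_indicator measurableSet_Ici, Measure.restrict_restrict measurableSet_Ici,
      hIci, lintegral_const_mul _ hw]
    have hwint : (∫⁻ x in Ici t, w x) =
        ENNReal.ofReal (t ^ ((1-p-a)+1) * (4/((a-1)^2))) := by
      rw [← Measure.restrict_congr_set Ioi_ae_eq_Ici]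
      have hint : IntegrableOn (fun x : ℝ => x ^ (1-p-a) / (1-p)) (Ioi t) :=
        (integrableOn_Ioi_rpow_of_lt hc ht).div_const _
      rw [hwdef, ← ofReal_integral_eq_lintegral_ofReal hint ?_]
      · congr 1
        rw [integral_div, integral_Ioi_rpow_of_lt hc ht, hc1, h1p,
          neg_div_neg_eq, div_div, show ((a-1)/2) * ((a-1)/2) = (a-1)^2/4 by ring,
          div_div_eq_mul_div, mul_div_assoc]
      · filter_upwards [ae_restrict_mem measurableSet_Ioi] with x hx
        have : (0:ℝ) < x := lt_trans ht hx
        positivity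
    rw [hwint, hgdef, ← ENNReal.ofReal_mul (by positivity), ← ENNReal.ofReal_mul (by positivity)]
    congr 1
    have hcomb : (t:ℝ)^p * t^((1-p-a)+1) = t^(2-a) := by
      rw [← Real.rpow_add ht, show p + ((1-p-a)+1) = 2-a by ring]
    rw [← hcomb]; ring
  calc ∫⁻ t in Ioi (0:ℝ), ∫⁻ x in Ioi (0:ℝ), H x t
      = ∫⁻ t in Ioi (0:ℝ),
          ENNReal.ofReal (4/(a-1)^2) * ENNReal.ofReal (f t ^ 2 * t ^ (2-a)) :=
        setLIntegral_congr_fun measurableSet_Ioi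
          (fun t ht => e3 t ht)
    _ = ENNReal.ofReal (4/(a-1)^2) * ∫⁻ t in Ioi (0:ℝ), ENNReal.ofReal (f t ^ 2 * t ^ (2-a)) :=
        lintegral_const_mul _ (meas_main hf (2-a))
    _ ≤ ENNReal.ofReal (4/(a-1)^2) *
          ∫⁻ x in Ioi (0:ℝ), ENNReal.ofReal (f x ^ 2 * x ^ (2-a)) := le_rfl

lemma ftc_iter {u : ℝ → ℝ} (hu : ContDiff ℝ (⊤ : ℕ∞) u) {i : ℕ}
    (h0 : iteratedDeriv i u 0 = 0) (x : ℝ) :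
    iteratedDeriv i u x = ∫ t in (0:ℝ)..x, iteratedDeriv (i+1) u t := by
  have hd : ∀ y ∈ uIcc (0:ℝ) x, HasDerivAt (iteratedDeriv i u) (iteratedDeriv (i+1) u y) y := by
    intro y _
    rw [iteratedDeriv_succ]
    exact ((hu.differentiable_iteratedDeriv i (by exact_mod_cast WithTop.coe_lt_coe.mpr (WithTop.coe_lt_top i))) y).hasDerivAt
  rw [intervalIntegral.integral_eq_sub_of_hasDerivAt hd
    ((hu.continuous_iteratedDeriv (i+1) (by exact_mod_cast WithTop.coe_le_coe.mpr le_top)).intervalIntegrable _ _), h0, sub_zero]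

/-- Kondratiev embedding lemma (Lemma 3.5): if the derivatives of `u` up to order `k-2`
vanish at the origin and `∂^(k-1) u ∈ H¹₀`, then `u ∈ H^k₀` on the half-line with
measure `r dr`. -/
theorem kondratiev_embedding (k : ℕ) (hk : 2 ≤ k) :
    ∃ c > (0:ℝ), ∃ c' > (0:ℝ), ∀ u : ℝ → ℝ, ContDiff ℝ (⊤ : ℕ∞) u →
      (∀ i < k - 1, iteratedDeriv i u 0 = 0) →
      (∫⁻ r in Ioi (0:ℝ), ENNReal.ofReal ((iteratedDeriv k u r) ^ 2 * r
          + (iteratedDeriv (k - 1) u r) ^ 2 * r ^ (-2 : ℝ) * r)) ≠ ⊤ →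
      ((∫⁻ r in Ioi (0:ℝ), ENNReal.ofReal ((u r) ^ 2 * r ^ (-(2 * (k : ℝ))) * r))
          ≤ ENNReal.ofReal c *
            ∫⁻ r in Ioi (0:ℝ), ENNReal.ofReal ((iteratedDeriv (k - 1) u r) ^ 2 * r ^ (-2 : ℝ) * r)) ∧
      ((∫⁻ r in Ioi (0:ℝ), ENNReal.ofReal (∑ i ∈ Finset.range (k + 1),
            (iteratedDeriv i u r) ^ 2 * r ^ (2 * (i : ℝ) - 2 * (k : ℝ)) * r))
          ≤ ENNReal.ofReal c' *
            ∫⁻ r in Ioi (0:ℝ), ENNReal.ofReal ((iteratedDeriv k u r) ^ 2 * r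
              + (iteratedDeriv (k - 1) u r) ^ 2 * r ^ (-2 : ℝ) * r)) := by
  obtain ⟨m, rfl⟩ : ∃ m, k = m + 2 := ⟨k - 2, by omega⟩
  have hk1 : m + 2 - 1 = m + 1 := by omega
  refine ⟨1, one_pos, (m:ℝ) + 3, by positivity, ?_⟩
  intro u hu hz _
  have hcont : ∀ i : ℕ, Continuous (iteratedDeriv i u) := fun i =>
    hu.continuous_iteratedDeriv i (by exact_mod_cast WithTop.coe_le_coe.mpr le_top)
  set I : ℕ → ℝ≥0∞ := fun i => ∫⁻ r in Ioi (0:ℝ),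
      ENNReal.ofReal ((iteratedDeriv i u r)^2 * r ^ (2*(i:ℝ) + 1 - 2*((m:ℝ)+2))) with hI
  have hrw : ∀ (A B : ℝ), A + 1 = B → ∀ r : ℝ, r ∈ Ioi (0:ℝ) → r ^ A * r = r ^ B := by
    intro A B h r hr
    rw [show r ^ A * r = r ^ A * r ^ (1:ℝ) by rw [Real.rpow_one],
      ← Real.rpow_add hr, h]
  -- one Hardy step
  have hstep : ∀ i ≤ m, I i ≤ I (i+1) := by
    intro i hi
    have hiR : (i:ℝ) ≤ m := by exact_mod_cast hi
    have ha : (1:ℝ) < 2*((m:ℝ)+2) - 1 - 2*i := by linarith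
    have hF : ∀ r : ℝ, iteratedDeriv i u r = ∫ t in (0:ℝ)..r, iteratedDeriv (i+1) u t :=
      ftc_iter hu (hz i (by omega))
    have h1 : I i = ∫⁻ r in Ioi (0:ℝ),
        ENNReal.ofReal ((∫ t in (0:ℝ)..r, iteratedDeriv (i+1) u t)^2
          * r ^ (-(2*((m:ℝ)+2) - 1 - 2*i))) := by
      rw [hI]
      refine setLIntegral_congr_fun measurableSet_Ioi
        (fun r hr => ?_)
      rw [← hF, show -(2*((m:ℝ)+2) - 1 - 2*(i:ℝ)) = 2*(i:ℝ) + 1 - 2*((m:ℝ)+2) by ring]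
    have h2 := hardy_ineq (hcont (i+1)) ha
    have hexp : (2:ℝ) - (2*((m:ℝ)+2) - 1 - 2*i) = 2*((i+1:ℕ):ℝ) + 1 - 2*((m:ℝ)+2) := by
      push_cast; ring
    have h3 : (∫⁻ r in Ioi (0:ℝ), ENNReal.ofReal ((iteratedDeriv (i+1) u r)^2
        * r ^ ((2:ℝ) - (2*((m:ℝ)+2) - 1 - 2*i)))) = I (i+1) := by
      rw [hI]; simp_rw [hexp]
    have hconst : ENNReal.ofReal (4/((2*((m:ℝ)+2) - 1 - 2*i)-1)^2) ≤ 1 := by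
      rw [ENNReal.ofReal_le_one]
      rw [div_le_one (by nlinarith)]
      nlinarith
    calc I i = _ := h1
      _ ≤ ENNReal.ofReal (4/((2*((m:ℝ)+2) - 1 - 2*i)-1)^2) *
            ∫⁻ r in Ioi (0:ℝ), ENNReal.ofReal ((iteratedDeriv (i+1) u r)^2
              * r ^ ((2:ℝ) - (2*((m:ℝ)+2) - 1 - 2*i))) := h2
      _ ≤ 1 * I (i+1) := by rw [h3]; exact mul_le_mul' hconst le_rfl
      _ = I (i+1) := one_mul _
  have hmono : ∀ j, ∀ i, i ≤ j → j ≤ m + 1 → I i ≤ I j := by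
    intro j
    induction j with
    | zero => intro i hi _; have : i = 0 := by omega
              subst this; exact le_rfl
    | succ n ih =>
        intro i hi hj
        by_cases hin : i ≤ n
        · exact (ih i hin (by omega)).trans (hstep n (by omega))
        · have : i = n + 1 := by omega
          subst this; exact le_rfl
  -- identifications
  have hL1 : (∫⁻ r in Ioi (0:ℝ),
      ENNReal.ofReal ((u r) ^ 2 * r ^ (-(2 * ((m+2:ℕ) : ℝ))) * r)) = I 0 := by
    rw [hI]
    refine setLIntegral_congr_fun measurableSet_Ioi
      (fun r hr => ?_)
    rw [iteratedDeriv_zero, mul_assoc,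
      hrw (-(2 * ((m+2:ℕ) : ℝ))) (2*((0:ℕ):ℝ) + 1 - 2*((m:ℝ)+2)) (by push_cast; ring) r hr]
  have hRa : (∫⁻ r in Ioi (0:ℝ),
      ENNReal.ofReal ((iteratedDeriv (m+2-1) u r)^2 * r ^ (-2:ℝ) * r)) = I (m+1) := by
    rw [hI, hk1]
    refine setLIntegral_congr_fun measurableSet_Ioi
      (fun r hr => ?_)
    rw [mul_assoc,
      hrw (-2:ℝ) (2*((m+1:ℕ):ℝ) + 1 - 2*((m:ℝ)+2)) (by push_cast; ring) r hr]
  have hRk : (∫⁻ r in Ioi (0:ℝ),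
      ENNReal.ofReal ((iteratedDeriv (m+2) u r)^2 * r)) = I (m+2) := by
    rw [hI]
    refine setLIntegral_congr_fun measurableSet_Ioi
      (fun r hr => ?_)
    rw [show (2*(((m+2:ℕ)):ℝ) + 1 - 2*((m:ℝ)+2)) = 1 by push_cast; ring, Real.rpow_one]
  have hRsplit : (∫⁻ r in Ioi (0:ℝ), ENNReal.ofReal ((iteratedDeriv (m+2) u r) ^ 2 * r
      + (iteratedDeriv (m+2-1) u r) ^ 2 * r ^ (-2 : ℝ) * r)) = I (m+2) + I (m+1) := by
    have e : ∀ r ∈ Ioi (0:ℝ), ENNReal.ofReal ((iteratedDeriv (m+2) u r) ^ 2 * r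
        + (iteratedDeriv (m+2-1) u r) ^ 2 * r ^ (-2 : ℝ) * r)
        = ENNReal.ofReal ((iteratedDeriv (m+2) u r) ^ 2 * r)
          + ENNReal.ofReal ((iteratedDeriv (m+2-1) u r) ^ 2 * r ^ (-2 : ℝ) * r) := by
      intro r hr
      have hr' : (0:ℝ) < r := hr
      rw [ENNReal.ofReal_add (by positivity) (by positivity)]
    rw [setLIntegral_congr_fun measurableSet_Ioi e,
      lintegral_add_left (show Measurable fun r : ℝ => ENNReal.ofReal ((iteratedDeriv (m+2) u r) ^ 2 * r) from (((hcont (m+2)).measurable.pow_const 2).mul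
        measurable_id').ennreal_ofReal), hRk, hRa]
  constructor
  · rw [hL1, ENNReal.ofReal_one, one_mul, hRa]
    exact hmono (m+1) 0 (by omega) le_rfl
  · have hL2 : (∫⁻ r in Ioi (0:ℝ), ENNReal.ofReal (∑ i ∈ Finset.range (m+2+1),
        (iteratedDeriv i u r) ^ 2 * r ^ (2 * (i : ℝ) - 2 * ((m+2:ℕ) : ℝ)) * r))
        = ∑ i ∈ Finset.range (m+2+1), I i := by
      have e : ∀ r ∈ Ioi (0:ℝ), ENNReal.ofReal (∑ i ∈ Finset.range (m+2+1),
          (iteratedDeriv i u r) ^ 2 * r ^ (2 * (i : ℝ) - 2 * ((m+2:ℕ) : ℝ)) * r)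
          = ∑ i ∈ Finset.range (m+2+1),
            ENNReal.ofReal ((iteratedDeriv i u r)^2 * r ^ (2*(i:ℝ) + 1 - 2*((m:ℝ)+2))) := by
        intro r hr
        have hr' : (0:ℝ) < r := hr
        rw [ENNReal.ofReal_sum_of_nonneg (fun i _ => by positivity)]
        exact Finset.sum_congr rfl fun i _ => by
          rw [mul_assoc, hrw (2 * (i : ℝ) - 2 * ((m+2:ℕ) : ℝ))
            (2*((i:ℕ):ℝ) + 1 - 2*((m:ℝ)+2)) (by push_cast; ring) r hr]
      rw [setLIntegral_congr_fun measurableSet_Ioi e,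
        lintegral_finset_sum _ (fun i _ => meas_main (hcont i) _)]
    rw [hL2, hRsplit]
    have hsum : (∑ i ∈ Finset.range (m+2+1), I i)
        ≤ (m+2+1) • (I (m+1) + I (m+2)) := by
      have hb : (∑ i ∈ Finset.range (m+2+1), I i)
          ≤ ∑ _i ∈ Finset.range (m+2+1), (I (m+1) + I (m+2)) := by
        refine Finset.sum_le_sum fun i hi => ?_
        by_cases hin : i ≤ m + 1
        · exact le_trans (hmono (m+1) i hin le_rfl) le_self_add
        · have : i = m + 2 := by simp at hi; omega
          subst this; exact le_add_self
      rwa [Finset.sum_const, Finset.card_range] at hb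
    refine hsum.trans ?_
    rw [nsmul_eq_mul]
    have hcast : ((m+2+1 : ℕ) : ℝ≥0∞) = ENNReal.ofReal ((m:ℝ) + 3) := by
      rw [← ENNReal.ofReal_natCast]
      congr 1
      push_cast; ring
    rw [hcast, add_comm (I (m+1))]
end

section
/- Let Ω = (0,R) × (−a,a) with measure r dr dz and let ψ₁ be a smooth solution of −ψ₁,rr − (3/r)ψ₁,r − ψ₁,zz = ω₁ with ψ₁ = 0 on r = R and z = ±a, and with ψ₁,r and ψ₁,z vanishing at r = 0. Then ∫_Ω (ψ₁,rz² + ψ₁,zz²) r dr dz + ∫_{−a}^a ψ₁,z(0,z)² dz ≤ ∫_Ω ω₁² r dr dz. -/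
open MeasureTheory Set

noncomputable def pdr (f : ℝ → ℝ → ℝ) : ℝ → ℝ → ℝ := fun r z => deriv (fun s => f s z) r
noncomputable def pdz (f : ℝ → ℝ → ℝ) : ℝ → ℝ → ℝ := fun r z => deriv (fun w => f r w) z

section helpers

variable {f : ℝ → ℝ → ℝ}

lemma hasDerivAt_slice1 (hf : ContDiff ℝ (⊤ : ℕ∞) (Function.uncurry f)) (r z : ℝ) :
    HasDerivAt (fun s => f s z) (fderiv ℝ (Function.uncurry f) (r, z) (1, 0)) r := by
  have h1 : HasDerivAt (fun s : ℝ => ((s, z) : ℝ × ℝ)) (1, 0) r :=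
    (hasDerivAt_id r).prodMk (hasDerivAt_const r z)
  exact ((hf.differentiable (by simp) (r, z)).hasFDerivAt.comp_hasDerivAt r h1)

lemma hasDerivAt_slice2 (hf : ContDiff ℝ (⊤ : ℕ∞) (Function.uncurry f)) (r z : ℝ) :
    HasDerivAt (fun w => f r w) (fderiv ℝ (Function.uncurry f) (r, z) (0, 1)) z := by
  have h1 : HasDerivAt (fun w : ℝ => ((r, w) : ℝ × ℝ)) (0, 1) z :=
    (hasDerivAt_const z r).prodMk (hasDerivAt_id z)
  exact ((hf.differentiable (by simp) (r, z)).hasFDerivAt.comp_hasDerivAt z h1)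

lemma pdr_eq (hf : ContDiff ℝ (⊤ : ℕ∞) (Function.uncurry f)) (r z : ℝ) :
    pdr f r z = fderiv ℝ (Function.uncurry f) (r, z) (1, 0) :=
  (hasDerivAt_slice1 hf r z).deriv

lemma pdz_eq (hf : ContDiff ℝ (⊤ : ℕ∞) (Function.uncurry f)) (r z : ℝ) :
    pdz f r z = fderiv ℝ (Function.uncurry f) (r, z) (0, 1) :=
  (hasDerivAt_slice2 hf r z).deriv

lemma hasDerivAt_pdr (hf : ContDiff ℝ (⊤ : ℕ∞) (Function.uncurry f)) (r z : ℝ) :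
    HasDerivAt (fun s => f s z) (pdr f r z) r := by
  rw [pdr_eq hf]; exact hasDerivAt_slice1 hf r z

lemma hasDerivAt_pdz (hf : ContDiff ℝ (⊤ : ℕ∞) (Function.uncurry f)) (r z : ℝ) :
    HasDerivAt (fun w => f r w) (pdz f r z) z := by
  rw [pdz_eq hf]; exact hasDerivAt_slice2 hf r z

lemma contDiff_pdr (hf : ContDiff ℝ (⊤ : ℕ∞) (Function.uncurry f)) :
    ContDiff ℝ (⊤ : ℕ∞) (Function.uncurry (pdr f)) := by
  have : Function.uncurry (pdr f) = fun p : ℝ × ℝ => fderiv ℝ (Function.uncurry f) p (1, 0) := by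
    funext p
    exact pdr_eq hf p.1 p.2
  rw [this]
  exact (hf.fderiv_right (by exact_mod_cast (le_top : ((⊤:ℕ∞)+1:ℕ∞) ≤ ⊤))).clm_apply contDiff_const

lemma contDiff_pdz (hf : ContDiff ℝ (⊤ : ℕ∞) (Function.uncurry f)) :
    ContDiff ℝ (⊤ : ℕ∞) (Function.uncurry (pdz f)) := by
  have : Function.uncurry (pdz f) = fun p : ℝ × ℝ => fderiv ℝ (Function.uncurry f) p (0, 1) := by
    funext p
    exact pdz_eq hf p.1 p.2
  rw [this]
  exact (hf.fderiv_right (by exact_mod_cast (le_top : ((⊤:ℕ∞)+1:ℕ∞) ≤ ⊤))).clm_apply contDiff_const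

lemma clairaut (hf : ContDiff ℝ (⊤ : ℕ∞) (Function.uncurry f)) (r z : ℝ) :
    pdr (pdz f) r z = pdz (pdr f) r z := by
  have hF : ContDiff ℝ (⊤ : ℕ∞) (fderiv ℝ (Function.uncurry f)) :=
    hf.fderiv_right (by exact_mod_cast (le_top : ((⊤:ℕ∞)+1:ℕ∞) ≤ ⊤))
  have hd1 : HasDerivAt (fun s => fderiv ℝ (Function.uncurry f) (s, z))
      (fderiv ℝ (fderiv ℝ (Function.uncurry f)) (r, z) (1, 0)) r := by
    have h1 : HasDerivAt (fun s : ℝ => ((s, z) : ℝ × ℝ)) (1, 0) r :=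
      (hasDerivAt_id r).prodMk (hasDerivAt_const r z)
    exact (hF.differentiable (by simp) (r, z)).hasFDerivAt.comp_hasDerivAt r h1
  have hd2 : HasDerivAt (fun w => fderiv ℝ (Function.uncurry f) (r, w))
      (fderiv ℝ (fderiv ℝ (Function.uncurry f)) (r, z) (0, 1)) z := by
    have h1 : HasDerivAt (fun w : ℝ => ((r, w) : ℝ × ℝ)) (0, 1) z :=
      (hasDerivAt_const z r).prodMk (hasDerivAt_id z)
    exact (hF.differentiable (by simp) (r, z)).hasFDerivAt.comp_hasDerivAt z h1
  have e1 : pdr (pdz f) r z = fderiv ℝ (fderiv ℝ (Function.uncurry f)) (r, z) (1, 0) (0, 1) := by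
    have : (fun s => pdz f s z) = fun s => fderiv ℝ (Function.uncurry f) (s, z) (0, 1) := by
      funext s; exact pdz_eq hf s z
    have hd := hd1.clm_apply (hasDerivAt_const r ((0 : ℝ), (1 : ℝ)))
    simp only [add_zero, map_zero] at hd
    rw [pdr, this]
    exact hd.deriv
  have e2 : pdz (pdr f) r z = fderiv ℝ (fderiv ℝ (Function.uncurry f)) (r, z) (0, 1) (1, 0) := by
    have : (fun w => pdr f r w) = fun w => fderiv ℝ (Function.uncurry f) (r, w) (1, 0) := by
      funext w; exact pdr_eq hf r w
    have hd := hd2.clm_apply (hasDerivAt_const z ((1 : ℝ), (0 : ℝ)))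
    simp only [add_zero, map_zero] at hd
    rw [pdz, this]
    exact hd.deriv
  rw [e1, e2]
  exact (hf.contDiffAt.isSymmSndFDerivAt (by simp only [minSmoothness_of_isRCLikeNormedField]; exact WithTop.coe_le_coe.mpr le_top)) _ _

end helpers

section engdefs

/-- `P` boundary-flux function in `r`. -/
noncomputable def engP (ψ : ℝ → ℝ → ℝ) : ℝ → ℝ → ℝ := fun r z =>
  (pdz ψ r z) ^ 2 - r * pdr ψ r z * pdz (pdz ψ) r z

/-- `Q` boundary-flux function in `z`. -/
noncomputable def engQ (ψ : ℝ → ℝ → ℝ) : ℝ → ℝ → ℝ := fun r z =>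
  r * pdr ψ r z * pdr (pdz ψ) r z - 2 * pdr ψ r z * pdz ψ r z

noncomputable def engvP (ψ : ℝ → ℝ → ℝ) : ℝ → ℝ → ℝ := fun r z =>
  2 * pdz ψ r z * pdr (pdz ψ) r z -
    ((pdr ψ r z + r * pdr (pdr ψ) r z) * pdz (pdz ψ) r z +
      r * pdr ψ r z * pdr (pdz (pdz ψ)) r z)

noncomputable def engvQ (ψ : ℝ → ℝ → ℝ) : ℝ → ℝ → ℝ := fun r z =>
  ((0 * pdr ψ r z + r * pdz (pdr ψ) r z) * pdr (pdz ψ) r z +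
      r * pdr ψ r z * pdz (pdr (pdz ψ)) r z) -
    ((0 * pdr ψ r z + 2 * pdz (pdr ψ) r z) * pdz ψ r z +
      2 * pdr ψ r z * pdz (pdz ψ) r z)

noncomputable def engE (ψ : ℝ → ℝ → ℝ) : ℝ → ℝ → ℝ := fun r z =>
  ((pdr (pdz ψ) r z) ^ 2 + (pdz (pdz ψ) r z) ^ 2) * r

noncomputable def engG (ψ : ℝ → ℝ → ℝ) : ℝ → ℝ → ℝ := fun r z =>
  -(r * pdr (pdr ψ) r z + 3 * pdr ψ r z + r * pdz (pdz ψ) r z)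

noncomputable def engH (ψ : ℝ → ℝ → ℝ) : ℝ → ℝ → ℝ := fun r z =>
  engG ψ r z * pdz (pdz ψ) r z + engE ψ r z

noncomputable def engM (ψ : ℝ → ℝ → ℝ) : ℝ → ℝ → ℝ := fun r z =>
  -(2 * (engG ψ r z * pdz (pdz ψ) r z)) - r * (pdz (pdz ψ) r z) ^ 2

end engdefs

section englemmas

variable {ψ : ℝ → ℝ → ℝ} (hsm : ContDiff ℝ (⊤ : ℕ∞) (Function.uncurry ψ))

include hsm

lemma eng_hasDerivAt_P (r z : ℝ) :
    HasDerivAt (fun s => engP ψ s z) (engvP ψ r z) r := by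
  have hA := hasDerivAt_pdr (contDiff_pdr hsm) r z
  have hB := hasDerivAt_pdr (contDiff_pdz hsm) r z
  have hC := hasDerivAt_pdr (contDiff_pdz (contDiff_pdz hsm)) r z
  have h := (hB.pow 2).sub (((hasDerivAt_id r).mul hA).mul hC)
  norm_num at h
  exact h

lemma eng_hasDerivAt_Q (r z : ℝ) :
    HasDerivAt (fun w => engQ ψ r w) (engvQ ψ r z) z := by
  have hA := hasDerivAt_pdz (contDiff_pdr hsm) r z
  have hB := hasDerivAt_pdz (contDiff_pdz hsm) r z
  have hD := hasDerivAt_pdz (contDiff_pdr (contDiff_pdz hsm)) r z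
  have h := (((hasDerivAt_const z r).mul hA).mul hD).sub
      (((hasDerivAt_const z (2:ℝ)).mul hA).mul hB)
  exact h

lemma eng_sum (r z : ℝ) : engvP ψ r z + engvQ ψ r z = engH ψ r z := by
  simp only [engvP, engvQ, engH, engG, engE]
  rw [clairaut hsm r z, clairaut (contDiff_pdz hsm) r z]
  ring

end englemmas

section contint

lemma contSlice1 {f : ℝ → ℝ → ℝ} (hf : Continuous fun p : ℝ × ℝ => f p.1 p.2) (z : ℝ) :
    Continuous fun r => f r z :=
  hf.comp (continuous_id.prodMk continuous_const)

lemma contSlice2 {f : ℝ → ℝ → ℝ} (hf : Continuous fun p : ℝ × ℝ => f p.1 p.2) (r : ℝ) :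
    Continuous fun z => f r z :=
  hf.comp (continuous_const.prodMk continuous_id)

lemma intOn2 {F : ℝ × ℝ → ℝ} (hF : Continuous F) (x1 x2 y1 y2 : ℝ) :
    IntegrableOn F (Ioo x1 x2 ×ˢ Ioo y1 y2) ((volume : Measure ℝ).prod volume) :=
  ((hF.continuousOn).integrableOn_compact (isCompact_Icc.prod isCompact_Icc)).mono_set
    (prod_mono Ioo_subset_Icc_self Ioo_subset_Icc_self)

lemma intOn1 {F : ℝ → ℝ} (hF : Continuous F) (x y : ℝ) :
    IntegrableOn F (Ioo x y) volume :=
  ((hF.continuousOn).integrableOn_compact isCompact_Icc).mono_set Ioo_subset_Icc_self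

end contint

/-- The product measure on the rectangle `(-a,a) × (0,R)` (axial × radial). -/
noncomputable def engMeas (R a : ℝ) : Measure (ℝ × ℝ) :=
  ((volume : Measure ℝ).restrict (Ioo (-a) a)).prod (volume.restrict (Ioo (0:ℝ) R))

/-- First energy inequality of Lemma 3.8 (inequality (3.42)). -/
theorem energy_estimate_342 (R a : ℝ) (hR : 0 < R) (ha : 0 < a)
    (ψ ω : ℝ → ℝ → ℝ)
    (hsm : ContDiff ℝ (⊤ : ℕ∞) (Function.uncurry ψ))
    (hpde : ∀ r ∈ Ioo 0 R, ∀ z ∈ Ioo (-a) a,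
      -(pdr (pdr ψ) r z) - 3 / r * pdr ψ r z - pdz (pdz ψ) r z = ω r z)
    (hbR : ∀ z ∈ Icc (-a) a, ψ R z = 0)
    (hba : ∀ r ∈ Icc 0 R, ψ r a = 0 ∧ ψ r (-a) = 0)
    (haxis : ∀ z ∈ Icc (-a) a, pdr ψ 0 z = 0 ∧ pdz ψ 0 z = 0) :
    (∫⁻ z in Ioo (-a) a, ∫⁻ r in Ioo (0:ℝ) R,
        ENNReal.ofReal (((pdr (pdz ψ) r z) ^ 2 + (pdz (pdz ψ) r z) ^ 2) * r))
      + (∫⁻ z in Ioo (-a) a, ENNReal.ofReal ((pdz ψ 0 z) ^ 2))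
      ≤ ∫⁻ z in Ioo (-a) a, ∫⁻ r in Ioo (0:ℝ) R, ENNReal.ofReal ((ω r z) ^ 2 * r) := by
  have cA := contDiff_pdr hsm
  have cB := contDiff_pdz hsm
  have cC := contDiff_pdz cB
  have cD := contDiff_pdr cB
  have cArr := contDiff_pdr cA
  have cAz := contDiff_pdz cA
  have cCr := contDiff_pdr cC
  have cDz := contDiff_pdz cD
  have kA : Continuous fun p : ℝ × ℝ => pdr ψ p.1 p.2 := cA.continuous
  have kB : Continuous fun p : ℝ × ℝ => pdz ψ p.1 p.2 := cB.continuous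
  have kC : Continuous fun p : ℝ × ℝ => pdz (pdz ψ) p.1 p.2 := cC.continuous
  have kD : Continuous fun p : ℝ × ℝ => pdr (pdz ψ) p.1 p.2 := cD.continuous
  have kArr : Continuous fun p : ℝ × ℝ => pdr (pdr ψ) p.1 p.2 := cArr.continuous
  have kAz : Continuous fun p : ℝ × ℝ => pdz (pdr ψ) p.1 p.2 := cAz.continuous
  have kCr : Continuous fun p : ℝ × ℝ => pdr (pdz (pdz ψ)) p.1 p.2 := cCr.continuous
  have kDz : Continuous fun p : ℝ × ℝ => pdz (pdr (pdz ψ)) p.1 p.2 := cDz.continuous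
  have kE : Continuous fun p : ℝ × ℝ => engE ψ p.1 p.2 :=
    ((kD.pow 2).add (kC.pow 2)).mul continuous_fst
  have kG : Continuous fun p : ℝ × ℝ => engG ψ p.1 p.2 :=
    (((continuous_fst.mul kArr).add (continuous_const.mul kA)).add
      (continuous_fst.mul kC)).neg
  have kH : Continuous fun p : ℝ × ℝ => engH ψ p.1 p.2 := (kG.mul kC).add kE
  have kM : Continuous fun p : ℝ × ℝ => engM ψ p.1 p.2 :=
    ((continuous_const.mul (kG.mul kC)).neg).sub (continuous_fst.mul (kC.pow 2))
  have kvP : Continuous fun p : ℝ × ℝ => engvP ψ p.1 p.2 :=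
    ((continuous_const.mul kB).mul kD).sub
      (((kA.add (continuous_fst.mul kArr)).mul kC).add ((continuous_fst.mul kA).mul kCr))
  have kvQ : Continuous fun p : ℝ × ℝ => engvQ ψ p.1 p.2 :=
    ((((continuous_const.mul kA).add (continuous_fst.mul kAz)).mul kD).add
        ((continuous_fst.mul kA).mul kDz)).sub
      ((((continuous_const.mul kA).add (continuous_const.mul kAz)).mul kB).add
        ((continuous_const.mul kA).mul kC))
  have hInt : ∀ {F : ℝ × ℝ → ℝ}, Continuous F → Integrable F (engMeas R a) := by
    intro F hF
    unfold engMeas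
    rw [Measure.prod_restrict]
    exact intOn2 hF _ _ _ _
  have hmem : ∀ᵐ p ∂(engMeas R a), p ∈ Ioo (-a) a ×ˢ Ioo (0:ℝ) R := by
    unfold engMeas
    rw [Measure.prod_restrict]
    exact ae_restrict_mem (measurableSet_Ioo.prod measurableSet_Ioo)
  -- boundary facts
  have hB0 : ∀ z ∈ Ioo (-a) a, pdz ψ 0 z = 0 := fun z hz =>
    (haxis z (Ioo_subset_Icc_self hz)).2
  have hBR : ∀ z ∈ Ioo (-a) a, pdz ψ R z = 0 := by
    intro z hz
    have hev : (fun w => ψ R w) =ᶠ[nhds z] fun _ => (0:ℝ) := by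
      filter_upwards [Ioo_mem_nhds hz.1 hz.2] with w hw
      exact hbR w (Ioo_subset_Icc_self hw)
    show deriv (fun w => ψ R w) z = 0
    rw [hev.deriv_eq]; exact deriv_const z 0
  have hCR : ∀ z ∈ Ioo (-a) a, pdz (pdz ψ) R z = 0 := by
    intro z hz
    have hev : (fun w => pdz ψ R w) =ᶠ[nhds z] fun _ => (0:ℝ) := by
      filter_upwards [Ioo_mem_nhds hz.1 hz.2] with w hw
      exact hBR w hw
    show deriv (fun w => pdz ψ R w) z = 0
    rw [hev.deriv_eq]; exact deriv_const z 0
  have hAa : ∀ r ∈ Ioo (0:ℝ) R, pdr ψ r a = 0 := by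
    intro r hr
    have hev : (fun s => ψ s a) =ᶠ[nhds r] fun _ => (0:ℝ) := by
      filter_upwards [Ioo_mem_nhds hr.1 hr.2] with s hs
      exact (hba s (Ioo_subset_Icc_self hs)).1
    show deriv (fun s => ψ s a) r = 0
    rw [hev.deriv_eq]; exact deriv_const r 0
  have hAma : ∀ r ∈ Ioo (0:ℝ) R, pdr ψ r (-a) = 0 := by
    intro r hr
    have hev : (fun s => ψ s (-a)) =ᶠ[nhds r] fun _ => (0:ℝ) := by
      filter_upwards [Ioo_mem_nhds hr.1 hr.2] with s hs
      exact (hba s (Ioo_subset_Icc_self hs)).2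
    show deriv (fun s => ψ s (-a)) r = 0
    rw [hev.deriv_eq]; exact deriv_const r 0
  -- FTC in each direction
  have hPz : ∀ z ∈ Ioo (-a) a, (∫ r in Ioo (0:ℝ) R, engvP ψ r z) = 0 := by
    intro z hz
    have h1 : (∫ r in Ioo (0:ℝ) R, engvP ψ r z) = ∫ r in (0:ℝ)..R, engvP ψ r z := by
      rw [intervalIntegral.integral_of_le hR.le, integral_Ioc_eq_integral_Ioo]
    rw [h1, intervalIntegral.integral_eq_sub_of_hasDerivAt
        (fun x _ => eng_hasDerivAt_P hsm x z)
        ((contSlice1 kvP z).intervalIntegrable 0 R)]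
    simp [engP, hBR z hz, hCR z hz, hB0 z hz]
  have hQr : ∀ r ∈ Ioo (0:ℝ) R, (∫ z in Ioo (-a) a, engvQ ψ r z) = 0 := by
    intro r hr
    have h1 : (∫ z in Ioo (-a) a, engvQ ψ r z) = ∫ z in (-a)..a, engvQ ψ r z := by
      rw [intervalIntegral.integral_of_le (by linarith), integral_Ioc_eq_integral_Ioo]
    rw [h1, intervalIntegral.integral_eq_sub_of_hasDerivAt
        (fun x _ => eng_hasDerivAt_Q hsm r x)
        ((contSlice2 kvQ r).intervalIntegrable (-a) a)]
    simp [engQ, hAa r hr, hAma r hr]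
  -- the integral identity
  have hstep1 : ∀ z ∈ Ioo (-a) a,
      (∫ r in Ioo (0:ℝ) R, engH ψ r z) = ∫ r in Ioo (0:ℝ) R, engvQ ψ r z := by
    intro z hz
    calc (∫ r in Ioo (0:ℝ) R, engH ψ r z)
        = ∫ r in Ioo (0:ℝ) R, (engvP ψ r z + engvQ ψ r z) := by
          refine setIntegral_congr_fun measurableSet_Ioo fun r _ => ?_
          exact (eng_sum hsm r z).symm
      _ = (∫ r in Ioo (0:ℝ) R, engvP ψ r z) + ∫ r in Ioo (0:ℝ) R, engvQ ψ r z :=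
          integral_add (intOn1 (contSlice1 kvP z) 0 R) (intOn1 (contSlice1 kvQ z) 0 R)
      _ = ∫ r in Ioo (0:ℝ) R, engvQ ψ r z := by rw [hPz z hz, zero_add]
  have hkey : (∫ p, engH ψ p.2 p.1 ∂(engMeas R a)) = 0 := by
    have hAll : (∫ z in Ioo (-a) a, ∫ r in Ioo (0:ℝ) R, engH ψ r z)
        = ∫ p, engH ψ p.2 p.1 ∂(engMeas R a) :=
      integral_integral (hInt (kH.comp continuous_swap))
    rw [← hAll]
    have hswap : (∫ z in Ioo (-a) a, ∫ r in Ioo (0:ℝ) R, engvQ ψ r z)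
        = ∫ r in Ioo (0:ℝ) R, ∫ z in Ioo (-a) a, engvQ ψ r z :=
      integral_integral_swap (hInt (kvQ.comp continuous_swap))
    calc (∫ z in Ioo (-a) a, ∫ r in Ioo (0:ℝ) R, engH ψ r z)
        = ∫ z in Ioo (-a) a, ∫ r in Ioo (0:ℝ) R, engvQ ψ r z :=
          setIntegral_congr_fun measurableSet_Ioo hstep1
      _ = ∫ r in Ioo (0:ℝ) R, ∫ z in Ioo (-a) a, engvQ ψ r z := hswap
      _ = ∫ r in Ioo (0:ℝ) R, (0:ℝ) := setIntegral_congr_fun measurableSet_Ioo hQr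
      _ = 0 := by simp
  -- splitting and the basic real inequality
  have hGC : Integrable (fun p : ℝ × ℝ => engG ψ p.2 p.1 * pdz (pdz ψ) p.2 p.1)
      (engMeas R a) := hInt ((kG.mul kC).comp continuous_swap)
  have hE : Integrable (fun p : ℝ × ℝ => engE ψ p.2 p.1) (engMeas R a) :=
    hInt (kE.comp continuous_swap)
  have hrC : Integrable (fun p : ℝ × ℝ => p.2 * (pdz (pdz ψ) p.2 p.1) ^ 2) (engMeas R a) :=
    hInt (continuous_snd.mul ((kC.comp continuous_swap).pow 2))
  have hM : Integrable (fun p : ℝ × ℝ => engM ψ p.2 p.1) (engMeas R a) :=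
    hInt (kM.comp continuous_swap)
  have hM0 : Integrable (fun p : ℝ × ℝ => max (engM ψ p.2 p.1) 0) (engMeas R a) :=
    hInt ((kM.max continuous_const).comp continuous_swap)
  have hsplit : (∫ p, engH ψ p.2 p.1 ∂(engMeas R a))
      = (∫ p, engG ψ p.2 p.1 * pdz (pdz ψ) p.2 p.1 ∂(engMeas R a))
        + ∫ p, engE ψ p.2 p.1 ∂(engMeas R a) := by
    rw [← integral_add hGC hE]
    rfl
  have hne : (∫ p, p.2 * (pdz (pdz ψ) p.2 p.1) ^ 2 ∂(engMeas R a))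
      ≤ ∫ p, engE ψ p.2 p.1 ∂(engMeas R a) := by
    refine integral_mono_ae hrC hE ?_
    filter_upwards [hmem] with p hp
    have h2 : 0 < p.2 := hp.2.1
    simp only [engE]
    nlinarith [sq_nonneg (pdr (pdz ψ) p.2 p.1)]
  have hMval : (∫ p, engM ψ p.2 p.1 ∂(engMeas R a))
      = (-2) * (∫ p, engG ψ p.2 p.1 * pdz (pdz ψ) p.2 p.1 ∂(engMeas R a))
        - ∫ p, p.2 * (pdz (pdz ψ) p.2 p.1) ^ 2 ∂(engMeas R a) := by
    have hfe : (fun p : ℝ × ℝ => engM ψ p.2 p.1)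
        = fun p : ℝ × ℝ => (-2) * (engG ψ p.2 p.1 * pdz (pdz ψ) p.2 p.1)
            + (-1) * (p.2 * (pdz (pdz ψ) p.2 p.1) ^ 2) := by
      funext p
      simp only [engM]
      ring
    rw [hfe, integral_add (hGC.const_mul _) (hrC.const_mul _), integral_const_mul,
      integral_const_mul]
    ring
  have hEM0 : (∫ p, engE ψ p.2 p.1 ∂(engMeas R a))
      ≤ ∫ p, max (engM ψ p.2 p.1) 0 ∂(engMeas R a) := by
    have h1 : (∫ p, engE ψ p.2 p.1 ∂(engMeas R a))
        ≤ ∫ p, engM ψ p.2 p.1 ∂(engMeas R a) := by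
      rw [hsplit] at hkey
      rw [hMval]
      linarith [hne]
    exact h1.trans (integral_mono hM hM0 fun p => le_max_left _ _)
  -- boundary lintegral vanishes
  have hbd : (∫⁻ z in Ioo (-a) a, ENNReal.ofReal ((pdz ψ 0 z) ^ 2)) = 0 := by
    rw [setLIntegral_congr_fun_ae measurableSet_Ioo
      (ae_of_all _ (fun z hz => by rw [hB0 z hz]; norm_num) :
        ∀ᵐ z ∂volume, z ∈ Ioo (-a) a → ENNReal.ofReal ((pdz ψ 0 z) ^ 2) = 0)]
    simp
  -- pass to lintegrals
  have hnn : 0 ≤ᵐ[engMeas R a] fun p : ℝ × ℝ => engE ψ p.2 p.1 := by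
    filter_upwards [hmem] with p hp
    have h2 : (0:ℝ) ≤ p.2 := hp.2.1.le
    simp only [engE, Pi.zero_apply]
    positivity
  have hT1 : (∫⁻ z in Ioo (-a) a, ∫⁻ r in Ioo (0:ℝ) R,
      ENNReal.ofReal (((pdr (pdz ψ) r z) ^ 2 + (pdz (pdz ψ) r z) ^ 2) * r))
      = ENNReal.ofReal (∫ p, engE ψ p.2 p.1 ∂(engMeas R a)) := by
    have hAll : (∫⁻ z in Ioo (-a) a, ∫⁻ r in Ioo (0:ℝ) R, ENNReal.ofReal (engE ψ r z))
        = ∫⁻ p, ENNReal.ofReal (engE ψ p.2 p.1) ∂(engMeas R a) :=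
      lintegral_lintegral
        ((ENNReal.continuous_ofReal.comp (kE.comp continuous_swap)).aemeasurable)
    calc (∫⁻ z in Ioo (-a) a, ∫⁻ r in Ioo (0:ℝ) R,
        ENNReal.ofReal (((pdr (pdz ψ) r z) ^ 2 + (pdz (pdz ψ) r z) ^ 2) * r))
        = ∫⁻ p, ENNReal.ofReal (engE ψ p.2 p.1) ∂(engMeas R a) := hAll
      _ = ENNReal.ofReal (∫ p, engE ψ p.2 p.1 ∂(engMeas R a)) :=
        (ofReal_integral_eq_lintegral_ofReal hE hnn).symm
  have hT2 : ENNReal.ofReal (∫ p, max (engM ψ p.2 p.1) 0 ∂(engMeas R a))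
      = ∫⁻ z in Ioo (-a) a, ∫⁻ r in Ioo (0:ℝ) R, ENNReal.ofReal (max (engM ψ r z) 0) := by
    have hAll : (∫⁻ z in Ioo (-a) a, ∫⁻ r in Ioo (0:ℝ) R,
        ENNReal.ofReal (max (engM ψ r z) 0))
        = ∫⁻ p, ENNReal.ofReal (max (engM ψ p.2 p.1) 0) ∂(engMeas R a) :=
      lintegral_lintegral
        ((ENNReal.continuous_ofReal.comp
          ((kM.max continuous_const).comp continuous_swap)).aemeasurable)
    rw [hAll]
    exact ofReal_integral_eq_lintegral_ofReal hM0 (ae_of_all _ fun p => le_max_right _ _)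
  have hfin : (∫⁻ z in Ioo (-a) a, ∫⁻ r in Ioo (0:ℝ) R,
      ENNReal.ofReal (max (engM ψ r z) 0))
      ≤ ∫⁻ z in Ioo (-a) a, ∫⁻ r in Ioo (0:ℝ) R, ENNReal.ofReal ((ω r z) ^ 2 * r) := by
    refine lintegral_mono_ae ?_
    filter_upwards [ae_restrict_mem measurableSet_Ioo] with z hz
    refine lintegral_mono_ae ?_
    filter_upwards [ae_restrict_mem measurableSet_Ioo] with r hr
    refine ENNReal.ofReal_le_ofReal ?_
    have hω := hpde r hr z hz
    have hr0 : r ≠ 0 := ne_of_gt hr.1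
    have hg : engG ψ r z = r * ω r z := by
      rw [← hω]
      simp only [engG]
      field_simp
      ring
    have hdiff : ω r z ^ 2 * r - engM ψ r z = r * (ω r z + pdz (pdz ψ) r z) ^ 2 := by
      simp only [engM, hg]
      ring
    have hnn2 : (0:ℝ) ≤ ω r z ^ 2 * r := mul_nonneg (sq_nonneg _) hr.1.le
    refine max_le ?_ hnn2
    nlinarith [mul_nonneg hr.1.le (sq_nonneg (ω r z + pdz (pdz ψ) r z))]
  rw [hbd, add_zero, hT1]
  calc ENNReal.ofReal (∫ p, engE ψ p.2 p.1 ∂(engMeas R a))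
      ≤ ENNReal.ofReal (∫ p, max (engM ψ p.2 p.1) 0 ∂(engMeas R a)) :=
        ENNReal.ofReal_le_ofReal hEM0
    _ = ∫⁻ z in Ioo (-a) a, ∫⁻ r in Ioo (0:ℝ) R,
        ENNReal.ofReal (max (engM ψ r z) 0) := hT2
    _ ≤ _ := hfin
end

section
/- Let u : (0,∞) → ℝ be smooth with u(0) = u₀, and let K : [0,∞) → ℝ be smooth with compact support satisfying K(r)/r² → c₀ < ∞ as r → 0⁺. Define χ(r) = ∫₀^r u'(τ)(1 + K(τ)) dτ. Then χ(0) = 0, (u − χ − u₀)(0) = 0, and (u − χ − u₀)'(r) = −u'(r) K(r); moreover there exists c > 0 depending only on K such that ∫₀^∞ (|(u−χ−u₀)''|² + r^(−2)|(u−χ−u₀)'|² + r^(−4)|u−χ−u₀|²) r dr ≤ c ∫₀^∞ (|u''|² + |u'|² + |u|²) r dr, provided u ∈ H²((0,∞), r dr). -/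
open MeasureTheory Set Filter
open scoped ENNReal

lemma G_sq_bound (u' K : ℝ → ℝ) (C R : ℝ) (hC : 0 < C) (hR : 0 < R)
    (hu'c : Continuous u') (hKc : Continuous K)
    (hKC : ∀ τ, 0 < τ → |K τ| ≤ C * τ ^ 2) (hKR : ∀ τ, R ≤ τ → K τ = 0)
    (A : ℝ≥0∞) (hA : ∀ r, (∫⁻ τ in Ioo 0 r, ENNReal.ofReal ((u' τ)^2 * τ)) ≤ A)
    (r : ℝ) (hr : 0 < r) :
    ENNReal.ofReal ((∫ τ in (0:ℝ)..r, u' τ * K τ)^2)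
      ≤ ENNReal.ofReal (C^2) * A * ENNReal.ofReal ((min r R)^3 * r) := by
  set G : ℝ := ∫ τ in (0:ℝ)..r, u' τ * K τ with hG
  have hio : G = ∫ τ in Ioo 0 r, u' τ * K τ := by
    rw [hG, intervalIntegral.integral_of_le hr.le, integral_Ioc_eq_integral_Ioo]
  have hInt : IntegrableOn (fun τ => u' τ * K τ) (Ioo 0 r) volume :=
    ((hu'c.mul hKc).integrableOn_Icc).mono_set Ioo_subset_Icc_self
  have habs : |G| ≤ ∫ τ in Ioo 0 r, |u' τ * K τ| := by
    rw [hio]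
    have h := norm_integral_le_integral_norm (μ := volume.restrict (Ioo 0 r)) (fun τ => u' τ * K τ)
    simp only [Real.norm_eq_abs] at h
    exact h
  set F : ℝ → ℝ≥0∞ := fun τ => ENNReal.ofReal (|u' τ| * Real.sqrt τ) with hF
  set Gg : ℝ → ℝ≥0∞ := fun τ => ENNReal.ofReal (C * (min τ R * Real.sqrt (min τ R))) with hGg
  have hpt : ∀ τ ∈ Ioo (0:ℝ) r, ENNReal.ofReal |u' τ * K τ| ≤ F τ * Gg τ := by
    intro τ hτ
    have hτ0 : 0 < τ := hτ.1
    have hKb : |K τ| ≤ C * (Real.sqrt τ * (min τ R * Real.sqrt (min τ R))) := by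
      rcases le_or_gt τ R with h | h
      · rw [min_eq_left h]
        have : Real.sqrt τ * (τ * Real.sqrt τ) = τ ^ 2 := by
          rw [show Real.sqrt τ * (τ * Real.sqrt τ) = (Real.sqrt τ * Real.sqrt τ) * τ by ring,
            Real.mul_self_sqrt hτ0.le]; ring
        rw [show Real.sqrt τ * (τ * Real.sqrt τ) = τ^2 from this]
        exact hKC τ hτ0
      · rw [hKR τ h.le]
        simp only [abs_zero]
        have h1 : (0:ℝ) ≤ min τ R := le_min hτ0.le hR.le
        positivity
    rw [hF, hGg, ← ENNReal.ofReal_mul (by positivity)]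
    apply ENNReal.ofReal_le_ofReal
    rw [abs_mul]
    calc |u' τ| * |K τ| ≤ |u' τ| * (C * (Real.sqrt τ * (min τ R * Real.sqrt (min τ R)))) :=
          mul_le_mul_of_nonneg_left hKb (abs_nonneg _)
      _ = |u' τ| * Real.sqrt τ * (C * (min τ R * Real.sqrt (min τ R))) := by ring
  have hconj : Real.HolderConjugate 2 2 := Real.HolderConjugate.two_two
  have hFm : AEMeasurable F (volume.restrict (Ioo 0 r)) :=
    (ENNReal.measurable_ofReal.comp ((hu'c.abs.mul Real.continuous_sqrt).measurable)).aemeasurable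
  have hGm : AEMeasurable Gg (volume.restrict (Ioo 0 r)) :=
    (ENNReal.measurable_ofReal.comp ((continuous_const.mul
      ((continuous_id.min continuous_const).mul
        (Real.continuous_sqrt.comp (continuous_id.min continuous_const)))).measurable)).aemeasurable
  have holder := ENNReal.lintegral_mul_le_Lp_mul_Lq (volume.restrict (Ioo 0 r)) hconj hFm hGm
  have hF2 : (∫⁻ τ in Ioo 0 r, F τ ^ (2:ℝ)) ≤ A := by
    have : (∫⁻ τ in Ioo 0 r, F τ ^ (2:ℝ))
        = ∫⁻ τ in Ioo 0 r, ENNReal.ofReal ((u' τ)^2 * τ) := by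
      apply setLIntegral_congr_fun measurableSet_Ioo
      intro τ hτ
      show ENNReal.ofReal (|u' τ| * Real.sqrt τ) ^ (2:ℝ) = ENNReal.ofReal ((u' τ)^2 * τ)
      rw [ENNReal.ofReal_rpow_of_nonneg (by positivity) (by norm_num)]
      congr 1
      rw [show ((2:ℝ)) = ((2:ℕ):ℝ) by norm_num, Real.rpow_natCast]
      rw [mul_pow, sq_abs, Real.sq_sqrt hτ.1.le]
    rw [this]; exact hA r
  have hG2 : (∫⁻ τ in Ioo 0 r, Gg τ ^ (2:ℝ)) ≤ ENNReal.ofReal (C^2 * (min r R)^3 * r) := by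
    have hb : ∀ τ ∈ Ioo (0:ℝ) r, Gg τ ^ (2:ℝ) ≤ ENNReal.ofReal (C^2 * (min r R)^3) := by
      intro τ hτ
      have h1 : (0:ℝ) ≤ min τ R := le_min hτ.1.le hR.le
      show ENNReal.ofReal (C * (min τ R * Real.sqrt (min τ R))) ^ (2:ℝ) ≤ _
      rw [ENNReal.ofReal_rpow_of_nonneg
        (mul_nonneg hC.le (mul_nonneg h1 (Real.sqrt_nonneg _))) (by norm_num)]
      apply ENNReal.ofReal_le_ofReal
      rw [show ((2:ℝ)) = ((2:ℕ):ℝ) by norm_num, Real.rpow_natCast]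
      have h2 : min τ R ≤ min r R := min_le_min hτ.2.le le_rfl
      have h3 : (C * (min τ R * Real.sqrt (min τ R)))^2 = C^2 * (min τ R)^3 := by
        rw [mul_pow, mul_pow, Real.sq_sqrt h1]; ring
      rw [h3]
      have : (min τ R)^3 ≤ (min r R)^3 := pow_le_pow_left₀ h1 h2 3
      nlinarith [sq_nonneg C]
    calc (∫⁻ τ in Ioo 0 r, Gg τ ^ (2:ℝ))
        ≤ ∫⁻ _ in Ioo (0:ℝ) r, ENNReal.ofReal (C^2 * (min r R)^3) :=
          setLIntegral_mono' measurableSet_Ioo hb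
      _ = ENNReal.ofReal (C^2 * (min r R)^3) * volume (Ioo (0:ℝ) r) := setLIntegral_const _ _
      _ = ENNReal.ofReal (C^2 * (min r R)^3) * ENNReal.ofReal r := by
          rw [Real.volume_Ioo, sub_zero]
      _ = ENNReal.ofReal (C^2 * (min r R)^3 * r) := by
          rw [← ENNReal.ofReal_mul (by positivity)]
  have hGle : ENNReal.ofReal |G|
      ≤ A ^ (1/2:ℝ) * (ENNReal.ofReal (C^2 * (min r R)^3 * r)) ^ (1/2:ℝ) := by
    calc ENNReal.ofReal |G| ≤ ENNReal.ofReal (∫ τ in Ioo 0 r, |u' τ * K τ|) :=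
          ENNReal.ofReal_le_ofReal habs
      _ = ∫⁻ τ in Ioo 0 r, ENNReal.ofReal |u' τ * K τ| :=
          ofReal_integral_eq_lintegral_ofReal hInt.abs (ae_of_all _ fun τ => abs_nonneg _)
      _ ≤ ∫⁻ τ in Ioo 0 r, (F * Gg) τ := setLIntegral_mono' measurableSet_Ioo hpt
      _ ≤ (∫⁻ τ in Ioo 0 r, F τ ^ (2:ℝ)) ^ (1/(2:ℝ))
            * (∫⁻ τ in Ioo 0 r, Gg τ ^ (2:ℝ)) ^ (1/(2:ℝ)) := holder
      _ ≤ A ^ (1/2:ℝ) * (ENNReal.ofReal (C^2 * (min r R)^3 * r)) ^ (1/2:ℝ) :=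
          mul_le_mul' (ENNReal.rpow_le_rpow hF2 (by norm_num))
            (ENNReal.rpow_le_rpow hG2 (by norm_num))
  have hsq : ∀ y : ℝ≥0∞, (y ^ (1/2:ℝ)) ^ (2:ℕ) = y := by
    intro y
    rw [← ENNReal.rpow_natCast (y ^ (1/2:ℝ)) 2, ← ENNReal.rpow_mul]
    norm_num
  calc ENNReal.ofReal (G^2) = (ENNReal.ofReal |G|) ^ (2:ℕ) := by
        rw [← ENNReal.ofReal_pow (abs_nonneg _), sq_abs]
    _ ≤ (A ^ (1/2:ℝ) * (ENNReal.ofReal (C^2 * (min r R)^3 * r)) ^ (1/2:ℝ)) ^ (2:ℕ) :=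
        pow_le_pow_left' hGle 2
    _ = A * ENNReal.ofReal (C^2 * (min r R)^3 * r) := by
        rw [mul_pow, hsq, hsq]
    _ = ENNReal.ofReal (C^2) * A * ENNReal.ofReal ((min r R)^3 * r) := by
        rw [show C^2 * (min r R)^3 * r = C^2 * ((min r R)^3 * r) by ring,
          ENNReal.ofReal_mul (by positivity)]
        ring

lemma psi_integral (R : ℝ) (hR : 0 < R) :
    (∫⁻ r in Ioi (0:ℝ), ENNReal.ofReal ((min r R)^3 * (r^2)⁻¹)) ≤ ENNReal.ofReal (2*R^2) := by
  have hsplit : Ioi (0:ℝ) = Ioc 0 R ∪ Ioi R := (Ioc_union_Ioi_eq_Ioi hR.le).symm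
  rw [hsplit, lintegral_union measurableSet_Ioi (Ioc_disjoint_Ioi le_rfl)]
  have h1 : (∫⁻ r in Ioc (0:ℝ) R, ENNReal.ofReal ((min r R)^3 * (r^2)⁻¹))
      ≤ ENNReal.ofReal (R^2) := by
    calc (∫⁻ r in Ioc (0:ℝ) R, ENNReal.ofReal ((min r R)^3 * (r^2)⁻¹))
        ≤ ∫⁻ _ in Ioc (0:ℝ) R, ENNReal.ofReal R := by
          apply setLIntegral_mono' measurableSet_Ioc
          intro r hr
          apply ENNReal.ofReal_le_ofReal
          rw [min_eq_left hr.2]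
          have h0 : (0:ℝ) < r := hr.1
          rw [show r^3 * (r^2)⁻¹ = r by field_simp]
          exact hr.2
      _ = ENNReal.ofReal R * volume (Ioc (0:ℝ) R) := setLIntegral_const _ _
      _ = ENNReal.ofReal (R^2) := by
          rw [Real.volume_Ioc, sub_zero, ← ENNReal.ofReal_mul hR.le]; ring_nf
  have h2 : (∫⁻ r in Ioi R, ENNReal.ofReal ((min r R)^3 * (r^2)⁻¹))
      ≤ ENNReal.ofReal (R^2) := by
    have hcongr : (∫⁻ r in Ioi R, ENNReal.ofReal ((min r R)^3 * (r^2)⁻¹))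
        = ∫⁻ r in Ioi R, ENNReal.ofReal (R^3 * r^(-2:ℝ)) := by
      apply setLIntegral_congr_fun measurableSet_Ioi
      intro r hr
      have h0 : (0:ℝ) < r := hR.trans hr
      dsimp only
      congr 1
      rw [min_eq_right (le_of_lt hr)]
      rw [Real.rpow_neg h0.le, show ((2:ℝ)) = ((2:ℕ):ℝ) by norm_num, Real.rpow_natCast]
    rw [hcongr]
    have hint : IntegrableOn (fun r : ℝ => R^3 * r^(-2:ℝ)) (Ioi R) volume :=
      (integrableOn_Ioi_rpow_of_lt (by norm_num) hR).const_mul _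
    rw [← ofReal_integral_eq_lintegral_ofReal hint]
    · apply ENNReal.ofReal_le_ofReal
      rw [integral_const_mul, integral_Ioi_rpow_of_lt (by norm_num) hR]
      norm_num
      rw [Real.rpow_neg_one, show R^3 = R^2 * R by ring, mul_assoc,
        mul_inv_cancel₀ hR.ne', mul_one]
    · filter_upwards [ae_restrict_mem measurableSet_Ioi] with r hr
      have := Real.rpow_nonneg (hR.trans hr).le (-2:ℝ)
      positivity
  calc _ ≤ ENNReal.ofReal (R^2) + ENNReal.ofReal (R^2) := add_le_add h1 h2
    _ = ENNReal.ofReal (2*R^2) := by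
        rw [← ENNReal.ofReal_add (by positivity) (by positivity)]; ring_nf

set_option maxHeartbeats 2000000 in
/-- Lemma 3.7 (one-dimensional version): the corrector `χ` with `χ' = u'(1+K)` makes
`u - χ - u(0)` lie in the weighted space `H²₀((0,∞))`, controlled by the unweighted
`H²` norm of `u` with measure `r dr`. -/
theorem corrector_chi (K : ℝ → ℝ) (c₀ : ℝ)
    (hK : ContDiff ℝ (⊤ : ℕ∞) K) (hKsupp : HasCompactSupport K)
    (hKlim : Tendsto (fun r => K r / r ^ 2) (nhdsWithin 0 (Ioi 0)) (nhds c₀)) :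
    ∃ c > (0:ℝ), ∀ u : ℝ → ℝ, ∀ u₀ : ℝ, ContDiff ℝ (⊤ : ℕ∞) u → u 0 = u₀ →
      ∀ χ : ℝ → ℝ, (∀ r, χ r = ∫ τ in Ioo 0 r, deriv u τ * (1 + K τ)) →
      (∫⁻ r in Ioi (0:ℝ), ENNReal.ofReal (((iteratedDeriv 2 u r) ^ 2
          + (deriv u r) ^ 2 + (u r) ^ 2) * r)) ≠ ⊤ →
      (χ 0 = 0 ∧
       u 0 - χ 0 - u₀ = 0 ∧
       (∀ r > (0:ℝ), deriv (fun s => u s - χ s - u₀) r = -(deriv u r * K r)) ∧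
       (∫⁻ r in Ioi (0:ℝ), ENNReal.ofReal
            ((iteratedDeriv 2 (fun s => u s - χ s - u₀) r) ^ 2 * r
              + (deriv (fun s => u s - χ s - u₀) r) ^ 2 * r ^ (-2 : ℝ) * r
              + (u r - χ r - u₀) ^ 2 * r ^ (-4 : ℝ) * r)
          ≤ ENNReal.ofReal c * ∫⁻ r in Ioi (0:ℝ), ENNReal.ofReal
              (((iteratedDeriv 2 u r) ^ 2 + (deriv u r) ^ 2 + (u r) ^ 2) * r))) := by
  classical
  -- continuity facts for K
  have hKc : Continuous K := hK.continuous
  have hKd : Differentiable ℝ K := hK.differentiable (by simp)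
  have hK'c : Continuous (deriv K) := (contDiff_infty_iff_deriv.mp hK).2.continuous
  -- global bounds
  obtain ⟨M₀, hM₀⟩ : ∃ M, ∀ x, |K x| ≤ M := by
    obtain ⟨M, hM⟩ := hKsupp.exists_bound_of_continuous hKc
    exact ⟨M, fun x => by simpa using hM x⟩
  have hM₀0 : 0 ≤ M₀ := (abs_nonneg _).trans (hM₀ 0)
  obtain ⟨M₁, hM₁⟩ : ∃ M, ∀ x, |deriv K x| ≤ M := by
    obtain ⟨M, hM⟩ := (hKsupp.deriv).exists_bound_of_continuous hK'c
    exact ⟨M, fun x => by simpa using hM x⟩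
  have hM₁0 : 0 ≤ M₁ := (abs_nonneg _).trans (hM₁ 0)
  -- support radius
  obtain ⟨R, hR, hKR⟩ : ∃ R > (0:ℝ), ∀ x, R ≤ x → K x = 0 := by
    obtain ⟨r, hr⟩ := hKsupp.isBounded.subset_closedBall 0
    refine ⟨|r| + 1, by positivity, fun x hx => ?_⟩
    apply image_eq_zero_of_notMem_tsupport
    intro hmem
    have h1 : (0:ℝ) < x := lt_of_lt_of_le (by positivity) hx
    linarith [le_abs_self r, (by simpa [Real.dist_eq, abs_of_pos h1] using hr hmem : x ≤ r)]
  -- quadratic bound near zero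
  obtain ⟨C, hC, hKC⟩ : ∃ C > (0:ℝ), ∀ r, 0 < r → |K r| ≤ C * r ^ 2 := by
    rw [Metric.tendsto_nhdsWithin_nhds] at hKlim
    obtain ⟨δ, hδ, hδ2⟩ := hKlim 1 one_pos
    refine ⟨max (|c₀| + 1) (M₀ / (min δ 1) ^ 2) + 1, ?_, fun r hr => ?_⟩
    · have : (0:ℝ) ≤ max (|c₀| + 1) (M₀ / (min δ 1) ^ 2) := le_max_of_le_left (by positivity)
      linarith
    rcases lt_or_ge r (min δ 1) with h | h
    · have hd : dist r 0 < δ := by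
        rw [Real.dist_eq, sub_zero, abs_of_pos hr]; exact h.trans_le (min_le_left _ _)
      have h5 := hδ2 hr hd
      rw [Real.dist_eq] at h5
      have h2 : |K r / r ^ 2| ≤ |c₀| + 1 := by
        calc |K r / r^2| = |K r / r^2 - c₀ + c₀| := by ring_nf
          _ ≤ |K r/r^2 - c₀| + |c₀| := abs_add_le _ _
          _ ≤ |c₀| + 1 := by linarith
      have hr2 : (0:ℝ) < r ^ 2 := by positivity
      rw [abs_div, abs_of_pos hr2, div_le_iff₀ hr2] at h2
      calc |K r| ≤ (|c₀|+1) * r^2 := h2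
        _ ≤ (max (|c₀| + 1) (M₀ / (min δ 1) ^ 2) + 1) * r^2 := by
            have := le_max_left (|c₀|+1) (M₀ / (min δ 1) ^ 2); nlinarith
    · have hm : (0:ℝ) < min δ 1 := lt_min hδ one_pos
      have h1 : |K r| ≤ M₀ := hM₀ r
      have h6 : M₀ ≤ (M₀ / (min δ 1)^2) * r^2 := by
        rw [div_mul_eq_mul_div, le_div_iff₀ (by positivity)]
        nlinarith [mul_self_le_mul_self hm.le h, hM₀ r, abs_nonneg (K r)]
      calc |K r| ≤ M₀ := h1
        _ ≤ (M₀ / (min δ 1)^2) * r^2 := h6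
        _ ≤ _ := by
            have := le_max_right (|c₀|+1) (M₀ / (min δ 1) ^ 2); nlinarith
  -- the constant
  have hc₁0 : (0:ℝ) ≤ 2*M₀^2 + 2*M₁^2 := by positivity
  refine ⟨2*M₀^2 + 2*M₁^2 + 3*C^2*R^2 + 1, by positivity, ?_⟩
  intro u u₀ hu hu0 χ hχ hfin
  -- derivative facts for u
  have hud : Differentiable ℝ u := (contDiff_infty_iff_deriv.mp hu).1
  have hu' : ContDiff ℝ (⊤:ℕ∞) (deriv u) := by exact_mod_cast (contDiff_infty_iff_deriv.mp hu).2
  have hu'c : Continuous (deriv u) := hu'.continuous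
  have hu'd : Differentiable ℝ (deriv u) := hu'.differentiable (by simp)
  have hu''c : Continuous (deriv (deriv u)) := (contDiff_infty_iff_deriv.mp hu').2.continuous
  -- χ basics
  have hχ0 : χ 0 = 0 := by rw [hχ 0]; simp
  set f : ℝ → ℝ := fun τ => deriv u τ * (1 + K τ) with hf
  have hfc : Continuous f := hu'c.mul (continuous_const.add hKc)
  have hχeq : ∀ r ∈ Ioi (0:ℝ), χ r = ∫ τ in (0:ℝ)..r, f τ := by
    intro r hr
    rw [hχ r, intervalIntegral.integral_of_le (le_of_lt hr), integral_Ioc_eq_integral_Ioo]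
  have hχd : ∀ r ∈ Ioi (0:ℝ), HasDerivAt χ (f r) r := by
    intro r hr
    have H := intervalIntegral.integral_hasDerivAt_right (hfc.intervalIntegrable 0 r)
      (hfc.stronglyMeasurableAtFilter volume (nhds r)) hfc.continuousAt
    exact H.congr_of_eventuallyEq (Filter.eventuallyEq_of_mem (Ioi_mem_nhds hr) hχeq)
  set v : ℝ → ℝ := fun s => u s - χ s - u₀ with hv
  have hvd : ∀ r ∈ Ioi (0:ℝ), HasDerivAt v (-(deriv u r * K r)) r := by
    intro r hr
    have h := ((hud r).hasDerivAt.sub (hχd r hr)).sub_const u₀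
    exact h.congr_deriv (show deriv u r - (deriv u r * (1 + K r)) = _ by ring)
  have E2 : ∀ r ∈ Ioi (0:ℝ), deriv v r = -(deriv u r * K r) := fun r hr => (hvd r hr).deriv
  -- second derivative
  have h2v : iteratedDeriv 2 v = deriv (deriv v) := by rw [iteratedDeriv_succ, iteratedDeriv_one]
  have h2u : iteratedDeriv 2 u = deriv (deriv u) := by rw [iteratedDeriv_succ, iteratedDeriv_one]
  have E1 : ∀ r ∈ Ioi (0:ℝ), iteratedDeriv 2 v r
      = -(iteratedDeriv 2 u r * K r + deriv u r * deriv K r) := by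
    intro r hr
    rw [h2v, h2u]
    have heq : deriv v =ᶠ[nhds r] fun s => -(deriv u s * K s) :=
      Filter.eventuallyEq_of_mem (Ioi_mem_nhds hr) E2
    rw [heq.deriv_eq]
    exact (((hu'd r).hasDerivAt.mul (hKd r).hasDerivAt).neg).deriv
  -- v as an integral
  set G : ℝ → ℝ := fun r => ∫ τ in (0:ℝ)..r, deriv u τ * K τ with hGdef
  have E3 : ∀ r ∈ Ioi (0:ℝ), v r = -(G r) := by
    intro r hr
    have h1 : ∫ τ in (0:ℝ)..r, deriv u τ = u r - u 0 :=
      intervalIntegral.integral_deriv_eq_sub (fun x _ => hud x) (hu'c.intervalIntegrable 0 r)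
    have h2 : ∫ τ in (0:ℝ)..r, (deriv u τ - f τ) = (u r - u 0) - χ r := by
      rw [intervalIntegral.integral_sub (hu'c.intervalIntegrable 0 r)
        (hfc.intervalIntegrable 0 r), h1, hχeq r hr]
    have h3 : ∀ τ, deriv u τ - f τ = -(deriv u τ * K τ) := by intro τ; simp [hf]; ring
    simp only [hv]
    rw [← hu0]
    have h4 : G r = -(∫ τ in (0:ℝ)..r, (deriv u τ - f τ)) := by
      rw [← intervalIntegral.integral_neg]
      exact intervalIntegral.integral_congr (fun τ _ => by rw [h3 τ, neg_neg])
    rw [h4, h2]; ring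
  have hGcont : Continuous G :=
    intervalIntegral.continuous_primitive (fun a b => (hu'c.mul hKc).intervalIntegrable a b) 0
  refine ⟨hχ0, by rw [hχ0, hu0]; ring, fun r hr => E2 r hr, ?_⟩
  -- names for the two sides
  set W : ℝ → ℝ := fun r => ((iteratedDeriv 2 u r) ^ 2 + (deriv u r) ^ 2 + (u r) ^ 2) * r with hW
  set N : ℝ≥0∞ := ∫⁻ r in Ioi (0:ℝ), ENNReal.ofReal (W r) with hN
  set A : ℝ≥0∞ := ∫⁻ r in Ioi (0:ℝ), ENNReal.ofReal ((deriv u r)^2 * r) with hA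
  have hWmono : ∀ r ∈ Ioi (0:ℝ), ENNReal.ofReal ((deriv u r)^2 * r) ≤ ENNReal.ofReal (W r) := by
    intro r hr
    apply ENNReal.ofReal_le_ofReal
    have hr0 : (0:ℝ) ≤ r := (le_of_lt hr)
    simp only [hW]
    nlinarith [sq_nonneg (iteratedDeriv 2 u r), sq_nonneg (u r), sq_nonneg (deriv u r)]
  have hAN : A ≤ N := setLIntegral_mono' measurableSet_Ioi hWmono
  have hANt : A ≠ ⊤ := fun h => hfin (top_le_iff.mp (h ▸ hAN))
  have hAr : ∀ r, (∫⁻ τ in Ioo 0 r, ENNReal.ofReal ((deriv u τ)^2 * τ)) ≤ A := by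
    intro r
    rw [hA]
    exact lintegral_mono' (Measure.restrict_mono Ioo_subset_Ioi_self le_rfl) le_rfl
  -- the three pointwise pieces
  set g1 : ℝ → ℝ≥0∞ := fun r =>
    ENNReal.ofReal ((iteratedDeriv 2 u r * K r + deriv u r * deriv K r)^2 * r) with hg1
  set g2 : ℝ → ℝ≥0∞ := fun r => ENNReal.ofReal ((deriv u r * K r)^2 * r⁻¹) with hg2
  set g3 : ℝ → ℝ≥0∞ := fun r => ENNReal.ofReal ((G r)^2 * (r^3)⁻¹) with hg3
  have hcongr : (∫⁻ r in Ioi (0:ℝ), ENNReal.ofReal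
        ((iteratedDeriv 2 v r) ^ 2 * r
          + (deriv v r) ^ 2 * r ^ (-2 : ℝ) * r
          + (u r - χ r - u₀) ^ 2 * r ^ (-4 : ℝ) * r))
      = ∫⁻ r in Ioi (0:ℝ), (g1 r + g2 r + g3 r) := by
    apply setLIntegral_congr_fun measurableSet_Ioi
    intro r hr
    have hr0 : (0:ℝ) < r := hr
    show ENNReal.ofReal ((iteratedDeriv 2 v r) ^ 2 * r
          + (deriv v r) ^ 2 * r ^ (-2 : ℝ) * r
          + (v r) ^ 2 * r ^ (-4 : ℝ) * r) = g1 r + g2 r + g3 r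
    have e2 : r ^ (-2:ℝ) = (r^2)⁻¹ := by
      rw [Real.rpow_neg hr0.le, show ((2:ℝ)) = ((2:ℕ):ℝ) by norm_num, Real.rpow_natCast]
    have e4 : r ^ (-4:ℝ) = (r^4)⁻¹ := by
      rw [Real.rpow_neg hr0.le, show ((4:ℝ)) = ((4:ℕ):ℝ) by norm_num, Real.rpow_natCast]
    rw [E1 r hr, E2 r hr, E3 r hr, e2, e4]
    rw [show (-(iteratedDeriv 2 u r * K r + deriv u r * deriv K r))^2
        = (iteratedDeriv 2 u r * K r + deriv u r * deriv K r)^2 from neg_sq _,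
      show (-(deriv u r * K r))^2 = (deriv u r * K r)^2 from neg_sq _,
      show (-(G r))^2 = (G r)^2 from neg_sq _]
    rw [show (deriv u r * K r)^2 * (r^2)⁻¹ * r = (deriv u r * K r)^2 * r⁻¹ by
        field_simp,
      show (G r)^2 * (r^4)⁻¹ * r = (G r)^2 * (r^3)⁻¹ by field_simp]
    rw [ENNReal.ofReal_add (by positivity) (by positivity),
      ENNReal.ofReal_add (by positivity) (by positivity)]
  rw [hcongr]
  have hitc : Continuous (iteratedDeriv 2 u) := by rw [h2u]; exact hu''c
  have hm2 : Measurable g2 :=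
    ENNReal.measurable_ofReal.comp
      ((((hu'c.mul hKc).pow 2).measurable).mul (measurable_id.inv))
  have hm3 : Measurable g3 :=
    ENNReal.measurable_ofReal.comp
      (((hGcont.pow 2).measurable).mul ((measurable_id.pow_const 3).inv))
  rw [lintegral_add_right _ hm3, lintegral_add_right _ hm2]
  -- bound T1
  have hT1 : (∫⁻ r in Ioi (0:ℝ), g1 r) ≤ ENNReal.ofReal (2*M₀^2 + 2*M₁^2) * N := by
    have hpt : ∀ r ∈ Ioi (0:ℝ), g1 r
        ≤ ENNReal.ofReal (2*M₀^2 + 2*M₁^2) * ENNReal.ofReal (W r) := by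
      intro r hr
      have hr0 : (0:ℝ) ≤ r := le_of_lt hr
      rw [hg1, ← ENNReal.ofReal_mul hc₁0]
      apply ENNReal.ofReal_le_ofReal
      have hK2 : (K r)^2 ≤ M₀^2 := sq_le_sq' (neg_le_of_abs_le (hM₀ r)) (le_of_abs_le (hM₀ r))
      have hK'2 : (deriv K r)^2 ≤ M₁^2 :=
        sq_le_sq' (neg_le_of_abs_le (hM₁ r)) (le_of_abs_le (hM₁ r))
      have key : (iteratedDeriv 2 u r * K r + deriv u r * deriv K r)^2
          ≤ (2*M₀^2 + 2*M₁^2) * ((iteratedDeriv 2 u r)^2 + (deriv u r)^2 + (u r)^2) := by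
        nlinarith [sq_nonneg (iteratedDeriv 2 u r * K r - deriv u r * deriv K r),
          sq_nonneg (iteratedDeriv 2 u r), sq_nonneg (deriv u r), sq_nonneg (u r),
          mul_nonneg (sq_nonneg M₁) (sq_nonneg (iteratedDeriv 2 u r)),
          mul_nonneg (sq_nonneg M₀) (sq_nonneg (deriv u r)),
          mul_nonneg (add_nonneg (mul_nonneg (by norm_num : (0:ℝ) ≤ 2) (sq_nonneg M₀))
            (mul_nonneg (by norm_num : (0:ℝ) ≤ 2) (sq_nonneg M₁))) (sq_nonneg (u r))]
      calc (iteratedDeriv 2 u r * K r + deriv u r * deriv K r)^2 * r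
          ≤ ((2*M₀^2 + 2*M₁^2) * ((iteratedDeriv 2 u r)^2 + (deriv u r)^2 + (u r)^2)) * r :=
            mul_le_mul_of_nonneg_right key hr0
        _ = (2*M₀^2 + 2*M₁^2) * W r := by simp only [hW]; ring
    calc (∫⁻ r in Ioi (0:ℝ), g1 r)
        ≤ ∫⁻ r in Ioi (0:ℝ), ENNReal.ofReal (2*M₀^2 + 2*M₁^2) * ENNReal.ofReal (W r) :=
          setLIntegral_mono' measurableSet_Ioi hpt
      _ = ENNReal.ofReal (2*M₀^2 + 2*M₁^2) * N := by
          rw [hN]; exact lintegral_const_mul' _ _ ENNReal.ofReal_ne_top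
  -- bound T2
  have hT2 : (∫⁻ r in Ioi (0:ℝ), g2 r) ≤ ENNReal.ofReal (C^2*R^2) * N := by
    have hpt : ∀ r ∈ Ioi (0:ℝ), g2 r ≤ ENNReal.ofReal (C^2*R^2) * ENNReal.ofReal (W r) := by
      intro r hr
      have hr0 : (0:ℝ) < r := hr
      rw [hg2, ← ENNReal.ofReal_mul (by positivity)]
      apply ENNReal.ofReal_le_ofReal
      have hWnn : 0 ≤ W r := by
        simp only [hW]
        exact mul_nonneg (by positivity) hr0.le
      rcases le_or_gt r R with hrR | hrR
      · have hKsq : (K r)^2 ≤ C^2 * r^4 := by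
          nlinarith [hKC r hr0, abs_nonneg (K r), sq_abs (K r)]
        have hr2R2 : r^2 ≤ R^2 := by nlinarith
        have h2 : (K r)^2 ≤ C^2*R^2*r^2 := by
          nlinarith [hKsq, mul_le_mul_of_nonneg_left hr2R2 (mul_nonneg (sq_nonneg C) (sq_nonneg r))]
        calc (deriv u r * K r)^2 * r⁻¹
            ≤ (C^2*R^2*r^2*(deriv u r)^2) * r⁻¹ := by
              apply mul_le_mul_of_nonneg_right _ (inv_nonneg.mpr hr0.le)
              nlinarith [sq_nonneg (deriv u r), h2]
          _ = C^2*R^2*((deriv u r)^2*r) := by field_simp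
          _ ≤ C^2*R^2 * W r := by
              apply mul_le_mul_of_nonneg_left _ (by positivity)
              simp only [hW]
              nlinarith [sq_nonneg (iteratedDeriv 2 u r), sq_nonneg (u r), hr0.le]
      · rw [hKR r hrR.le]
        calc (deriv u r * 0)^2 * r⁻¹ = 0 := by ring
          _ ≤ C^2*R^2 * W r := mul_nonneg (by positivity) hWnn
    calc (∫⁻ r in Ioi (0:ℝ), g2 r)
        ≤ ∫⁻ r in Ioi (0:ℝ), ENNReal.ofReal (C^2*R^2) * ENNReal.ofReal (W r) :=
          setLIntegral_mono' measurableSet_Ioi hpt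
      _ = ENNReal.ofReal (C^2*R^2) * N := by
          rw [hN]; exact lintegral_const_mul' _ _ ENNReal.ofReal_ne_top
  -- bound T3
  have hT3 : (∫⁻ r in Ioi (0:ℝ), g3 r) ≤ ENNReal.ofReal (2*C^2*R^2) * N := by
    have hpt : ∀ r ∈ Ioi (0:ℝ), g3 r
        ≤ (ENNReal.ofReal (C^2) * A) * ENNReal.ofReal ((min r R)^3 * (r^2)⁻¹) := by
      intro r hr
      have hr0 : (0:ℝ) < r := hr
      have hGb := G_sq_bound (deriv u) K C R hC hR hu'c hKc hKC hKR A hAr r hr0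
      have hmin : (0:ℝ) ≤ min r R := le_min hr0.le hR.le
      calc g3 r = ENNReal.ofReal ((G r)^2) * ENNReal.ofReal ((r^3)⁻¹) := by
            rw [hg3, ← ENNReal.ofReal_mul (sq_nonneg _)]
        _ ≤ (ENNReal.ofReal (C^2) * A * ENNReal.ofReal ((min r R)^3 * r))
              * ENNReal.ofReal ((r^3)⁻¹) := mul_le_mul_left hGb _
        _ = (ENNReal.ofReal (C^2) * A)
              * (ENNReal.ofReal ((min r R)^3 * r) * ENNReal.ofReal ((r^3)⁻¹)) := by ring
        _ = (ENNReal.ofReal (C^2) * A) * ENNReal.ofReal ((min r R)^3 * (r^2)⁻¹) := by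
            rw [← ENNReal.ofReal_mul (by positivity)]
            congr 1
            field_simp
    calc (∫⁻ r in Ioi (0:ℝ), g3 r)
        ≤ ∫⁻ r in Ioi (0:ℝ),
            (ENNReal.ofReal (C^2) * A) * ENNReal.ofReal ((min r R)^3 * (r^2)⁻¹) :=
          setLIntegral_mono' measurableSet_Ioi hpt
      _ = (ENNReal.ofReal (C^2) * A)
            * ∫⁻ r in Ioi (0:ℝ), ENNReal.ofReal ((min r R)^3 * (r^2)⁻¹) :=
          lintegral_const_mul' _ _ (ENNReal.mul_ne_top ENNReal.ofReal_ne_top hANt)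
      _ ≤ (ENNReal.ofReal (C^2) * A) * ENNReal.ofReal (2*R^2) :=
          mul_le_mul_right (psi_integral R hR) _
      _ ≤ (ENNReal.ofReal (C^2) * N) * ENNReal.ofReal (2*R^2) :=
          mul_le_mul_left (mul_le_mul_right hAN _) _
      _ = ENNReal.ofReal (2*C^2*R^2) * N := by
          rw [show ENNReal.ofReal (C^2) * N * ENNReal.ofReal (2*R^2)
              = (ENNReal.ofReal (C^2) * ENNReal.ofReal (2*R^2)) * N by ring,
            ← ENNReal.ofReal_mul (by positivity)]
          ring_nf
  have hsum : ENNReal.ofReal (2*M₀^2+2*M₁^2) + ENNReal.ofReal (C^2*R^2)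
      + ENNReal.ofReal (2*C^2*R^2)
      = ENNReal.ofReal ((2*M₀^2+2*M₁^2) + C^2*R^2 + 2*C^2*R^2) := by
    rw [← ENNReal.ofReal_add hc₁0 (by positivity),
      ← ENNReal.ofReal_add (add_nonneg hc₁0 (by positivity)) (by positivity)]
  have hfinal : (0:ℝ) ≤ C^2*R^2 := by positivity
  calc (∫⁻ r in Ioi (0:ℝ), g1 r) + (∫⁻ r in Ioi (0:ℝ), g2 r) + (∫⁻ r in Ioi (0:ℝ), g3 r)
      ≤ ENNReal.ofReal (2*M₀^2+2*M₁^2) * N + ENNReal.ofReal (C^2*R^2) * N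
          + ENNReal.ofReal (2*C^2*R^2) * N :=
        add_le_add (add_le_add hT1 hT2) hT3
    _ = (ENNReal.ofReal (2*M₀^2+2*M₁^2) + ENNReal.ofReal (C^2*R^2)
          + ENNReal.ofReal (2*C^2*R^2)) * N := by rw [add_mul, add_mul]
    _ = ENNReal.ofReal ((2*M₀^2+2*M₁^2) + C^2*R^2 + 2*C^2*R^2) * N := by rw [hsum]
    _ ≤ ENNReal.ofReal (2*M₀^2 + 2*M₁^2 + 3*C^2*R^2 + 1) * N :=
        mul_le_mul_left (ENNReal.ofReal_le_ofReal (by linarith)) N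
end
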